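/- Let G be a finite group, p a prime, and let A be a subgroup of maximum order among the self-centralizing subgroups of G. If |G : A| = p and |G : Z(G)| = p^i for some integer i > 2, then CD(G) = {A}. -/

import Mathlib

/-- The Chermak-Delgado measure of a subgroup `H` of `G`: `|H| · |C_G(H)|`. -/
noncomputable def cdMeasure (G : Type*) [Group G] (H : Subgroup G) : ℕ :=
  Nat.card H * Nat.card (Subgroup.centralizer (H : Set G))

/-- The Chermak-Delgado lattice of `G`: the set of subgroups whose
Chermak-Delgado measure is maximal. -/
def CD (G : Type*) [Group G] : Set (Subgroup G) :=
  {H : Subgroup G | ∀ K : Subgroup G, cdMeasure G K ≤ cdMeasure G H}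

section Aux

variable {G : Type*} [Group G] [Finite G]

lemma aux_card (H K L : Subgroup G) (hH : H ≤ L) (hK : K ≤ L) :
    Nat.card H * Nat.card K ≤ Nat.card (H ⊓ K : Subgroup G) * Nat.card L := by
  have e1 : Nat.card (H ⊓ K : Subgroup G) * (K.relIndex H) = Nat.card H := by
    have := Subgroup.card_mul_index ((H ⊓ K).subgroupOf H)
    rwa [Nat.card_congr (Subgroup.subgroupOfEquivOfLe inf_le_left).toEquiv,
      show ((H ⊓ K).subgroupOf H).index = (H ⊓ K).relIndex H from rfl,
      Subgroup.inf_relIndex_left] at this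
  have e2 : Nat.card K * (K.relIndex L) = Nat.card L := by
    have := Subgroup.card_mul_index (K.subgroupOf L)
    rwa [Nat.card_congr (Subgroup.subgroupOfEquivOfLe hK).toEquiv] at this
  have h3 : K.relIndex H ≤ K.relIndex L := by
    apply Subgroup.relIndex_le_of_le_right hH
    rw [show K.relIndex L = (K.subgroupOf L).index from rfl]
    exact Subgroup.index_ne_zero_of_finite
  calc Nat.card H * Nat.card K
      = Nat.card (H ⊓ K : Subgroup G) * (K.relIndex H) * Nat.card K := by rw [e1]
    _ ≤ Nat.card (H ⊓ K : Subgroup G) * (K.relIndex L) * Nat.card K := by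
        exact Nat.mul_le_mul_right _ (Nat.mul_le_mul_left _ h3)
    _ = Nat.card (H ⊓ K : Subgroup G) * Nat.card L := by
        rw [mul_assoc, mul_comm (K.relIndex L), e2]

lemma centralizer_inf_le_centralizer_sup (H K : Subgroup G) :
    Subgroup.centralizer (H : Set G) ⊓ Subgroup.centralizer (K : Set G) ≤
      Subgroup.centralizer ((H ⊔ K : Subgroup G) : Set G) := by
  rw [← Subgroup.le_centralizer_iff]
  apply sup_le
  · rw [Subgroup.le_centralizer_iff]; exact inf_le_left
  · rw [Subgroup.le_centralizer_iff]; exact inf_le_right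

lemma cd_ineq (H K : Subgroup G) :
    cdMeasure G H * cdMeasure G K ≤ cdMeasure G (H ⊓ K) * cdMeasure G (H ⊔ K) := by
  have h1 := aux_card H K (H ⊔ K) le_sup_left le_sup_right
  have h2 := aux_card (Subgroup.centralizer (H : Set G)) (Subgroup.centralizer (K : Set G))
    (Subgroup.centralizer ((H ⊓ K : Subgroup G) : Set G))
    (Subgroup.centralizer_le (by exact_mod_cast SetLike.coe_subset_coe.mpr inf_le_left))
    (Subgroup.centralizer_le (by exact_mod_cast SetLike.coe_subset_coe.mpr inf_le_right))
  have h3 : Nat.card (Subgroup.centralizer (H : Set G) ⊓ Subgroup.centralizer (K : Set G) :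
      Subgroup G) ≤ Nat.card (Subgroup.centralizer ((H ⊔ K : Subgroup G) : Set G)) :=
    Subgroup.card_le_of_le (centralizer_inf_le_centralizer_sup H K)
  calc cdMeasure G H * cdMeasure G K
      = (Nat.card H * Nat.card K) *
        (Nat.card (Subgroup.centralizer (H : Set G)) *
          Nat.card (Subgroup.centralizer (K : Set G))) := by
        unfold cdMeasure; ring
    _ ≤ (Nat.card (H ⊓ K : Subgroup G) * Nat.card (H ⊔ K : Subgroup G)) *
        ((Nat.card (Subgroup.centralizer (H : Set G) ⊓ Subgroup.centralizer (K : Set G) :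
          Subgroup G)) * Nat.card (Subgroup.centralizer ((H ⊓ K : Subgroup G) : Set G))) :=
        Nat.mul_le_mul h1 h2
    _ ≤ (Nat.card (H ⊓ K : Subgroup G) * Nat.card (H ⊔ K : Subgroup G)) *
        ((Nat.card (Subgroup.centralizer ((H ⊔ K : Subgroup G) : Set G))) *
          Nat.card (Subgroup.centralizer ((H ⊓ K : Subgroup G) : Set G))) :=
        Nat.mul_le_mul_left _ (Nat.mul_le_mul_right _ h3)
    _ = cdMeasure G (H ⊓ K) * cdMeasure G (H ⊔ K) := by
        unfold cdMeasure; ring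

lemma le_centralizer_centralizer' (H : Subgroup G) :
    H ≤ Subgroup.centralizer ((Subgroup.centralizer (H : Set G) : Subgroup G) : Set G) :=
  Subgroup.le_centralizer_iff.mpr le_rfl

end Aux

theorem stmt_1 (G : Type*) [Group G] [Finite G] (p : ℕ) (hp : p.Prime)
    (A : Subgroup G) (hA : Subgroup.centralizer (A : Set G) = A)
    (hAmax : ∀ B : Subgroup G, Subgroup.centralizer (B : Set G) = B →
      Nat.card B ≤ Nat.card A)
    (hiA : A.index = p) (i : ℕ) (hi : 2 < i)
    (hZ : (Subgroup.center G).index = p ^ i) :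
    CD G = {A} := by
  have hcardpos : ∀ H : Subgroup G, 0 < Nat.card H := fun H => Nat.card_pos
  have hmpos : ∀ H : Subgroup G, 0 < cdMeasure G H :=
    fun H => Nat.mul_pos (hcardpos H) (hcardpos _)
  have hGpos : 0 < Nat.card G := Nat.card_pos
  have hAG : Nat.card A * p = Nat.card G := by
    rw [← hiA]; exact Subgroup.card_mul_index A
  have hZG : Nat.card (Subgroup.center G) * p ^ i = Nat.card G := by
    rw [← hZ]; exact Subgroup.card_mul_index _
  have hmA : cdMeasure G A = Nat.card A * Nat.card A := by
    unfold cdMeasure; rw [hA]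
  have hmtop : cdMeasure G (⊤ : Subgroup G) = Nat.card G * Nat.card (Subgroup.center G) := by
    unfold cdMeasure
    rw [Subgroup.coe_top, Subgroup.centralizer_univ, Nat.card_congr Subgroup.topEquiv.toEquiv]
  -- the key contradiction: m(A) ≤ m(⊤) is impossible
  have hkey : ¬ (Nat.card A * Nat.card A ≤ Nat.card G * Nat.card (Subgroup.center G)) := by
    intro h
    have h2 : Nat.card A * Nat.card A * (p ^ i * (p * p)) ≤
        Nat.card G * Nat.card (Subgroup.center G) * (p ^ i * (p * p)) :=
      Nat.mul_le_mul_right _ h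
    have hL : Nat.card A * Nat.card A * (p ^ i * (p * p)) =
        (Nat.card G * Nat.card G) * p ^ i := by rw [← hAG]; ring
    have hR : Nat.card G * Nat.card (Subgroup.center G) * (p ^ i * (p * p)) =
        (Nat.card G * Nat.card G) * (p * p) := by rw [← hZG]; ring
    rw [hL, hR] at h2
    have h3 : p ^ i ≤ p ^ 2 := by
      have := Nat.le_of_mul_le_mul_left
        (by linarith [h2] : Nat.card G * Nat.card G * p ^ i ≤ Nat.card G * Nat.card G * (p*p))
        (Nat.mul_pos hGpos hGpos)
      calc p ^ i ≤ p * p := this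
        _ = p ^ 2 := by ring
    have := (Nat.pow_le_pow_iff_right hp.one_lt).mp h3
    omega
  -- any member of CD is contained in A
  have hsubA : ∀ H : Subgroup G, H ∈ CD G → H ≤ A := by
    intro H hH
    by_contra hnle
    have hJ : H ⊔ A = ⊤ := by
      have hdvd : (H ⊔ A).index ∣ A.index := Subgroup.index_dvd_of_le le_sup_right
      rw [hiA] at hdvd
      rcases (Nat.Prime.eq_one_or_self_of_dvd hp _ hdvd) with h1 | hpp
      · exact Subgroup.index_eq_one.mp h1
      · exfalso
        have := Subgroup.relIndex_mul_index (le_sup_right : A ≤ H ⊔ A)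
        rw [hiA, hpp] at this
        have hone : A.relIndex (H ⊔ A) = 1 := by
          have hp2 : A.relIndex (H ⊔ A) * p = 1 * p := by omega
          exact Nat.eq_of_mul_eq_mul_right hp.pos hp2
        have : H ⊔ A ≤ A := Subgroup.relIndex_eq_one.mp hone
        exact hnle (le_trans le_sup_left this)
    have hineq := cd_ineq H A
    rw [hJ] at hineq
    have h1 : cdMeasure G (H ⊓ A) ≤ cdMeasure G H := hH _
    have h2 : cdMeasure G H * cdMeasure G A ≤ cdMeasure G H * cdMeasure G (⊤ : Subgroup G) :=
      le_trans hineq (Nat.mul_le_mul_right _ h1)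
    have h3 : cdMeasure G A ≤ cdMeasure G (⊤ : Subgroup G) :=
      Nat.le_of_mul_le_mul_left h2 (hmpos H)
    rw [hmA, hmtop] at h3
    exact hkey h3
  -- any member of CD equals A
  have hEq : ∀ H : Subgroup G, H ∈ CD G → H = A := by
    intro H hH
    have hHle : H ≤ A := hsubA H hH
    have hCmem : Subgroup.centralizer (H : Set G) ∈ CD G := by
      intro K
      calc cdMeasure G K ≤ cdMeasure G H := hH K
        _ ≤ cdMeasure G (Subgroup.centralizer (H : Set G)) := by
            unfold cdMeasure
            rw [mul_comm (Nat.card H)]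
            exact Nat.mul_le_mul_left _ (Subgroup.card_le_of_le (le_centralizer_centralizer' H))
    have hCle : Subgroup.centralizer (H : Set G) ≤ A := hsubA _ hCmem
    have hAleC : A ≤ Subgroup.centralizer (H : Set G) := by
      rw [← hA]
      exact Subgroup.centralizer_le (SetLike.coe_subset_coe.mpr hHle)
    have hCA : Subgroup.centralizer (H : Set G) = A := le_antisymm hCle hAleC
    -- m(H) = |H| * |A| and m(A) = |A|², with m(A) ≤ m(H)
    have hmH : cdMeasure G H = Nat.card H * Nat.card A := by
      unfold cdMeasure; rw [hCA]
    have h4 : cdMeasure G A ≤ cdMeasure G H := hH A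
    rw [hmA, hmH] at h4
    have h5 : Nat.card A ≤ Nat.card H := Nat.le_of_mul_le_mul_right h4 (hcardpos A)
    exact Subgroup.eq_of_le_of_card_ge hHle h5
  -- CD is nonempty
  have : Finite (Subgroup G) := Finite.of_injective _ SetLike.coe_injective
  obtain ⟨M, hM⟩ := Finite.exists_max (cdMeasure G)
  have hMCD : M ∈ CD G := hM
  have hMA : M = A := hEq M hMCD
  ext H
  constructor
  · intro hH; exact hEq H hH
  · intro hH
    rcases hH with rfl
    rw [← hMA]
    exact hMCD
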